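/- Let A_1 ≥ A_2 ≥ ⋯ ≥ A_n and B_1 ≥ B_2 ≥ ⋯ ≥ B_n be Hermitian n×n complex matrices (decreasing in the positive semidefinite (Loewner) order) and let ω_1, …, ω_n be positive real numbers. Then (Σ_{j=1}^n ω_j) · Σ_{j=1}^n ω_j (A_j ∘ B_j) ≥ (Σ_{j=1}^n ω_j A_j) ∘ (Σ_{j=1}^n ω_j B_j), i.e., the difference of the two sides is positive semidefinite. -/

import Mathlib

open scoped Matrix ComplexOrder
open Finset

lemma posSemidef_sum {n : ℕ} {ι : Type*} (s : Finset ι) (f : ι → Matrix (Fin n) (Fin n) ℂ)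
    (hf : ∀ i ∈ s, (f i).PosSemidef) : (∑ i ∈ s, f i).PosSemidef :=
  Finset.sum_induction f _ (fun _ _ ha hb => ha.add hb) Matrix.PosSemidef.zero hf

/-- Schur product theorem. -/
lemma hadamard_posSemidef {n : ℕ} {M N : Matrix (Fin n) (Fin n) ℂ}
    (hM : M.PosSemidef) (hN : N.PosSemidef) : (M ⊙ N).PosSemidef := by
  obtain ⟨C, rfl⟩ : ∃ C : Matrix (Fin n) (Fin n) ℂ, N = Cᴴ * C := by
    open scoped MatrixOrder in
    obtain ⟨C, hC⟩ := CStarAlgebra.nonneg_iff_eq_star_mul_self.mp hN.nonneg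
    exact ⟨C, hC⟩
  have key : M ⊙ (Cᴴ * C)
      = ∑ k, (Matrix.diagonal (fun j => C k j))ᴴ * M * Matrix.diagonal (fun j => C k j) := by
    ext i j
    simp [Matrix.sum_apply, Matrix.hadamard_apply, Matrix.mul_apply,
      Matrix.diagonal_conjTranspose, Matrix.diagonal_apply, Finset.sum_mul,
      Matrix.conjTranspose_apply, Finset.mul_sum, mul_comm, mul_left_comm]
  rw [key]
  exact posSemidef_sum _ _ fun k _ => hM.conjTranspose_mul_mul_same _

lemma posSemidef_real_smul {n : ℕ} {M : Matrix (Fin n) (Fin n) ℂ} {c : ℝ}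
    (hc : 0 ≤ c) (hM : M.PosSemidef) : (c • M).PosSemidef := by
  rw [Matrix.posSemidef_iff_dotProduct_mulVec]
  constructor
  · ext i j
    have := congrFun (congrFun hM.1 i) j
    simp only [Matrix.conjTranspose_apply, Matrix.smul_apply, star_smul, star_trivial]
    rw [Matrix.conjTranspose_apply] at this
    rw [this]
  · intro x
    have h : (star x) ⬝ᵥ ((c • M) *ᵥ x) = (c : ℂ) * ((star x) ⬝ᵥ (M *ᵥ x)) := by
      simp only [dotProduct, Matrix.mulVec, Matrix.smul_apply, Complex.real_smul,
        Finset.mul_sum]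
      exact Finset.sum_congr rfl fun i _ => Finset.sum_congr rfl fun j _ => by ring
    rw [h]
    exact mul_nonneg (by exact_mod_cast hc) ((Matrix.posSemidef_iff_dotProduct_mulVec.mp hM).2 x)

lemma scalar_identity {n : ℕ} (w a b : Fin n → ℂ) :
    ∑ i, ∑ j, w i * w j * ((a i - a j) * (b i - b j))
      = 2 * ((∑ j, w j) * ∑ j, w j * (a j * b j) - (∑ j, w j * a j) * ∑ j, w j * b j) := by
  have h : ∀ i j : Fin n, w i * w j * ((a i - a j) * (b i - b j))
      = (w i * (w j * (a j * b j)) + w j * (w i * (a i * b i)))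
        - ((w i * a i) * (w j * b j) + (w j * a j) * (w i * b i)) := by
    intro i j; ring
  simp only [h, Finset.sum_sub_distrib, Finset.sum_add_distrib, ← Finset.mul_sum,
    ← Finset.sum_mul]
  ring

/-- Discrete Chebyshev inequality for the Hadamard product: if `A_1 ≥ ⋯ ≥ A_n` and
`B_1 ≥ ⋯ ≥ B_n` are Hermitian matrices (decreasing in the Loewner order) and the `ω_j` are
positive weights, then
`(∑ ω_j) • ∑ ω_j (A_j ∘ B_j) ≥ (∑ ω_j A_j) ∘ (∑ ω_j B_j)`. -/
theorem chebyshev_hadamard_discrete {n : ℕ} (A B : Fin n → Matrix (Fin n) (Fin n) ℂ)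
    (hAherm : ∀ j, (A j).IsHermitian) (hBherm : ∀ j, (B j).IsHermitian)
    (hAdec : ∀ i j, i ≤ j → (A i - A j).PosSemidef)
    (hBdec : ∀ i j, i ≤ j → (B i - B j).PosSemidef)
    (ω : Fin n → ℝ) (hω : ∀ j, 0 < ω j) :
    ((∑ j, ω j) • ∑ j, ω j • (A j ⊙ B j) -
      (∑ j, ω j • A j) ⊙ (∑ j, ω j • B j)).PosSemidef := by
  set S : Matrix (Fin n) (Fin n) ℂ :=
    ∑ i, ∑ j, (ω i * ω j) • ((A i - A j) ⊙ (B i - B j)) with hS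
  have hterm : ∀ i j : Fin n, ((ω i * ω j) • ((A i - A j) ⊙ (B i - B j))).PosSemidef := by
    intro i j
    rcases le_total i j with h | h
    · exact posSemidef_real_smul (mul_nonneg (hω i).le (hω j).le)
        (hadamard_posSemidef (hAdec i j h) (hBdec i j h))
    · have e : (A i - A j) ⊙ (B i - B j) = (A j - A i) ⊙ (B j - B i) := by
        ext a b
        simp only [Matrix.hadamard_apply, Matrix.sub_apply]
        ring
      rw [e]
      exact posSemidef_real_smul (mul_nonneg (hω i).le (hω j).le)
        (hadamard_posSemidef (hAdec j i h) (hBdec j i h))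
  have hSpsd : S.PosSemidef :=
    posSemidef_sum _ _ fun i _ => posSemidef_sum _ _ fun j _ => hterm i j
  have hkey : S = (2:ℝ) • ((∑ j, ω j) • ∑ j, ω j • (A j ⊙ B j) -
      (∑ j, ω j • A j) ⊙ (∑ j, ω j • B j)) := by
    ext a b
    have hs := scalar_identity (fun j => (ω j : ℂ)) (fun j => A j a b) (fun j => B j a b)
    simp only [hS, Matrix.sub_apply, Matrix.smul_apply, Matrix.sum_apply,
      Matrix.hadamard_apply, Complex.real_smul, Complex.ofReal_sum, Complex.ofReal_mul,
      Complex.ofReal_ofNat]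
    exact hs
  have : ((∑ j, ω j) • ∑ j, ω j • (A j ⊙ B j) -
      (∑ j, ω j • A j) ⊙ (∑ j, ω j • B j)) = (1/2 : ℝ) • S := by
    rw [hkey, smul_smul]
    norm_num
  rw [this]
  exact posSemidef_real_smul (by norm_num) hSpsd
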